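/- Let R be a ring of positive characteristic and let x, y be commuting periodic elements of R. Then x + y is periodic. -/

import Mathlib

open Pointwise

/-- An element of a ring is periodic if `x ^ n = x ^ m` for some `n > m ≥ 1`. -/
def IsPeriodicElem {R : Type*} [Ring R] (x : R) : Prop :=
  ∃ n m : ℕ, 1 ≤ m ∧ m < n ∧ x ^ n = x ^ m

lemma finite_range_pow {R : Type*} [Ring R] {x : R} (hx : IsPeriodicElem x) :
    (Set.range (x ^ ·)).Finite := by
  obtain ⟨a, b, hb1, hba, hab⟩ := hx
  apply Set.Finite.subset ((Set.finite_Iio a).image (x ^ ·))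
  rintro _ ⟨k, rfl⟩
  simp only [Set.mem_image, Set.mem_Iio]
  induction k using Nat.strong_induction_on with
  | _ k ih =>
    by_cases hk : k < a
    · exact ⟨k, hk, rfl⟩
    · push_neg at hk
      have hkk : x ^ k = x ^ (b + (k - a)) := by
        have h1 : k = a + (k - a) := by omega
        rw [h1, pow_add, hab, ← pow_add]
        congr 1
        omega
      obtain ⟨j, hj, hj2⟩ := ih (b + (k - a)) (by omega)
      exact ⟨j, hj, by rw [hj2, ← hkk]⟩

lemma closure_finite {R : Type*} [Ring R] (n : ℕ) (hn : 2 ≤ n) (hchar : CharP R n)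
    (S : Set R) (hS : S.Finite) : (AddSubmonoid.closure S : Set R).Finite := by
  have hnz : (n : R) = 0 := CharP.cast_eq_zero R n
  have hmod : ∀ (k : ℕ) (s : R), k • s = (k % n) • s := by
    intro k s
    conv_lhs => rw [← Nat.mod_add_div k n]
    rw [add_smul]
    have : (n * (k / n)) • s = 0 := by
      rw [nsmul_eq_mul]
      push_cast [hnz]
      simp
    rw [this, add_zero]
  have : NeZero n := ⟨by omega⟩
  classical
  set F := hS.toFinset with hF
  let T : Set R := Set.range (fun c : F → Fin n => ∑ s : F, ((c s : ℕ) • (s : R)))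
  have hTfin : T.Finite := Set.finite_range _
  apply hTfin.subset
  have hT0 : (0 : R) ∈ T := ⟨0, by simp⟩
  have hTadd : ∀ a ∈ T, ∀ b ∈ T, a + b ∈ T := by
    rintro _ ⟨c, rfl⟩ _ ⟨d, rfl⟩
    refine ⟨fun s => c s + d s, ?_⟩
    rw [← Finset.sum_add_distrib]
    apply Finset.sum_congr rfl
    intro s _
    rw [Fin.val_add, ← hmod, add_smul]
  have hTS : S ⊆ T := by
    intro s hs
    have hsF : s ∈ F := hS.mem_toFinset.mpr hs
    refine ⟨fun t => if t = ⟨s, hsF⟩ then 1 else 0, ?_⟩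
    simp only [apply_ite (fun z : Fin n => (z : ℕ)), ite_smul, Fin.val_zero, zero_smul]
    rw [Finset.sum_ite_eq' Finset.univ (⟨s, hsF⟩ : F) (fun t => ((1 : Fin n) : ℕ) • (t : R))]
    simp [Fin.val_one', Nat.mod_eq_of_lt (by omega : 1 < n)]
  let T' : AddSubmonoid R :=
    { carrier := T
      zero_mem' := hT0
      add_mem' := fun ha hb => hTadd _ ha _ hb }
  exact fun z hz => AddSubmonoid.closure_le.mpr (show S ⊆ ↑T' from hTS) hz

theorem sum_two_commuting_periodic {R : Type*} [Ring R] (n : ℕ) (hn : 0 < n)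
    (hchar : CharP R n) (x y : R) (hcomm : x * y = y * x)
    (hx : IsPeriodicElem x) (hy : IsPeriodicElem y) :
    IsPeriodicElem (x + y) := by
  rcases eq_or_lt_of_le (show 1 ≤ n from hn) with h1 | h2
  · have : CharP R 1 := by rwa [← h1] at hchar
    have : Subsingleton R := CharP.CharOne.subsingleton
    exact ⟨2, 1, le_refl _, one_lt_two, Subsingleton.elim _ _⟩
  · have hn2 : 2 ≤ n := h2
    have hX := finite_range_pow hx
    have hY := finite_range_pow hy
    set S : Set R := Set.range (x ^ ·) * Set.range (y ^ ·) with hSdef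
    have hSfin : S.Finite := hX.mul hY
    have hyx : ∀ j : ℕ, y ^ j * x = x * y ^ j := fun j =>
      ((Commute.symm hcomm).pow_left j)
    -- closure is stable under right multiplication by x and by y
    have hmulx : ∀ z ∈ AddSubmonoid.closure S, z * x ∈ AddSubmonoid.closure S := by
      intro z hz
      induction hz using AddSubmonoid.closure_induction with
      | mem w hw =>
        obtain ⟨a, ⟨i, rfl⟩, b, ⟨j, rfl⟩, rfl⟩ := hw
        apply AddSubmonoid.subset_closure
        exact ⟨x ^ (i + 1), ⟨i + 1, rfl⟩, y ^ j, ⟨j, rfl⟩, by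
          simp [pow_succ, mul_assoc, hyx]⟩
      | zero => simpa using AddSubmonoid.zero_mem _
      | add a b _ _ ha hb => rw [add_mul]; exact AddSubmonoid.add_mem _ ha hb
    have hmuly : ∀ z ∈ AddSubmonoid.closure S, z * y ∈ AddSubmonoid.closure S := by
      intro z hz
      induction hz using AddSubmonoid.closure_induction with
      | mem w hw =>
        obtain ⟨a, ⟨i, rfl⟩, b, ⟨j, rfl⟩, rfl⟩ := hw
        apply AddSubmonoid.subset_closure
        exact ⟨x ^ i, ⟨i, rfl⟩, y ^ (j + 1), ⟨j + 1, rfl⟩, by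
          simp [pow_succ, mul_assoc]⟩
      | zero => simpa using AddSubmonoid.zero_mem _
      | add a b _ _ ha hb => rw [add_mul]; exact AddSubmonoid.add_mem _ ha hb
    have hpow : ∀ k : ℕ, (x + y) ^ k ∈ AddSubmonoid.closure S := by
      intro k
      induction k with
      | zero =>
        apply AddSubmonoid.subset_closure
        exact ⟨x ^ 0, ⟨0, rfl⟩, y ^ 0, ⟨0, rfl⟩, by simp⟩
      | succ k ih =>
        rw [pow_succ, mul_add]
        exact AddSubmonoid.add_mem _ (hmulx _ ih) (hmuly _ ih)
    have hCfin : ((AddSubmonoid.closure S : AddSubmonoid R) : Set R).Finite :=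
      closure_finite n hn2 hchar S hSfin
    have : Finite ((AddSubmonoid.closure S : AddSubmonoid R) : Set R) := hCfin
    obtain ⟨k, l, hkl, heq⟩ := Finite.exists_ne_map_eq_of_infinite
      (fun k : ℕ => (⟨(x + y) ^ (k + 1), hpow (k + 1)⟩ :
        ((AddSubmonoid.closure S : AddSubmonoid R) : Set R)))
    have heq' : (x + y) ^ (k + 1) = (x + y) ^ (l + 1) := by
      simpa [Subtype.ext_iff] using heq
    rcases lt_or_gt_of_ne hkl with h | h
    · exact ⟨l + 1, k + 1, by omega, by omega, heq'.symm⟩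
    · exact ⟨k + 1, l + 1, by omega, by omega, heq'⟩
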